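/- Let M_f, M_r, G_+, G_−, X₀, A₁, B₁ be complex numbers with M_f, M_r, G_+, G_−, β nonzero, where α = (1+M_f+M_r)/M_f, β = (1+M_f+M_r)/M_r, G_+² − β G_+ + M_f/M_r = 0 and G_−² − α G_− + M_r/M_f = 0. If X₁ = A₁ + B₁, X₂ = G_+ A₁ + G_−⁻¹ B₁, and X₁ = X₀/α + X₂/β (the first-agent equation), and additionally 1 − G_+/β ≠ 0, then A₁ = G_+ X₀ − G_+ G_− B₁. -/

import Mathlib

/-- Reflection at the leader: with `α = (1+Mf+Mr)/Mf`, `β = (1+Mf+Mr)/Mr`, the wave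
quadratics for `G₊`, `G₋`, and the first-agent equation `X₁ = X₀/α + X₂/β`,
where `X₁ = A₁ + B₁` and `X₂ = G₊A₁ + G₋⁻¹B₁`, we get `A₁ = G₊X₀ - G₊G₋B₁`. -/
theorem stmt_3 (Mf Mr Gp Gm X0 X1 X2 A1 B1 : ℂ)
    (hf : Mf ≠ 0) (hr : Mr ≠ 0) (hGp : Gp ≠ 0) (hGm : Gm ≠ 0)
    (hβ : (1 + Mf + Mr) / Mr ≠ 0)
    (hquadp : Gp ^ 2 - ((1 + Mf + Mr) / Mr) * Gp + Mf / Mr = 0)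
    (hquadm : Gm ^ 2 - ((1 + Mf + Mr) / Mf) * Gm + Mr / Mf = 0)
    (hX1 : X1 = A1 + B1) (hX2 : X2 = Gp * A1 + Gm⁻¹ * B1)
    (hagent : X1 = X0 / ((1 + Mf + Mr) / Mf) + X2 / ((1 + Mf + Mr) / Mr))
    (hden : 1 - Gp / ((1 + Mf + Mr) / Mr) ≠ 0) :
    A1 = Gp * X0 - Gp * Gm * B1 := by
  have hs0 : (1 + Mf + Mr) ≠ 0 := by
    intro h
    exact hβ (by rw [h]; simp)
  -- clear denominators in the quadratics
  have hq1 : Mr * Gp ^ 2 - (1 + Mf + Mr) * Gp + Mf = 0 := by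
    field_simp at hquadp
    linear_combination hquadp
  have hq2 : Mf * Gm ^ 2 - (1 + Mf + Mr) * Gm + Mr = 0 := by
    field_simp at hquadm
    linear_combination hquadm
  -- clear denominators in the agent equation
  subst hX1 hX2
  have hA : (A1 + B1) * (1 + Mf + Mr) * Gm
      = X0 * Mf * Gm + (Gp * A1 * Gm + B1) * Mr := by
    field_simp at hagent
    apply mul_right_cancel₀ hs0
    linear_combination (1 + Mf + Mr) * hagent
  have hden' : ((1 + Mf + Mr) - Mr * Gp) * Gm ≠ 0 := by
    apply mul_ne_zero _ hGm
    intro h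
    apply hden
    rw [div_div_eq_mul_div, sub_eq_zero, eq_comm, div_eq_one_iff_eq hs0]
    linear_combination -h
  have key : ((1 + Mf + Mr) - Mr * Gp) * Gm * A1
      = ((1 + Mf + Mr) - Mr * Gp) * Gm * (Gp * X0 - Gp * Gm * B1) := by
    linear_combination hA + Gm * X0 * hq1 - Gm ^ 2 * B1 * hq1 + B1 * hq2
  exact mul_left_cancel₀ hden' key
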